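/- If (I_n)_{n≥0} is a nonzero ideal of 𝒵, i.e. I_d ≠ 0 for some d, then I_0 ≠ 0 (equivalently, the ideal I_0 of K[t] is generated by a nonzero monic polynomial g_∅). -/

import Mathlib

open Polynomial

/-- `𝒵_n = K[t][Σ_n]`, the group algebra of the symmetric group on `n` letters
over the polynomial ring `K[t]`. -/
abbrev Zn (K : Type) [Field K] (n : ℕ) : Type :=
  MonoidAlgebra (Polynomial K) (Equiv.Perm (Fin n))

/-- `KΣ_n`, the group algebra of the symmetric group over `K`. -/
abbrev GA (K : Type) [Field K] (n : ℕ) : Type :=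
  MonoidAlgebra K (Equiv.Perm (Fin n))

/-- The basis element `[σ]` of `𝒵_n`. -/
noncomputable def zbasis {K : Type} [Field K] {n : ℕ} (σ : Equiv.Perm (Fin n)) : Zn K n :=
  MonoidAlgebra.single σ 1

/-- For `σ ∈ Σ_{n+1}`, the permutation `τ ∈ Σ_n` with `τ (σ⁻¹ n) = σ n` and
`τ k = σ k` for all other `k`; if `σ` fixes the last point this is the
restriction of `σ`. -/
def reduceLast {n : ℕ} (σ : Equiv.Perm (Fin (n + 1))) : Equiv.Perm (Fin n) :=
  Equiv.removeNone (finSuccEquivLast.permCongr σ)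

/-- The contraction `∂ : 𝒵_{n+1} → 𝒵_n`: the `K[t]`-linear map with
`∂[σ] = t·[σ']` if `σ` fixes the last point (`σ'` the restriction) and
`∂[σ] = [reduceLast σ]` otherwise. -/
noncomputable def contractZ {K : Type} [Field K] {n : ℕ} (a : Zn K (n + 1)) : Zn K n :=
  Finsupp.sum a.coeff fun σ f =>
    MonoidAlgebra.single (reduceLast σ)
      ((if σ (Fin.last n) = Fin.last n then (X : Polynomial K) else 1) * f)

/-- `σ ⊕ τ ∈ Σ_{p+q}`: acts as `σ` on the first `p` letters and as the
shift of `τ` on the last `q` letters. -/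
def permShift {p q : ℕ} (σ : Equiv.Perm (Fin p)) (τ : Equiv.Perm (Fin q)) :
    Equiv.Perm (Fin (p + q)) :=
  finSumFinEquiv.permCongr (Equiv.sumCongr σ τ)

/-- The tensor product `⊗ : 𝒵_p × 𝒵_q → 𝒵_{p+q}`, the `K[t]`-bilinear map with
`[σ] ⊗ [τ] = [σ ⊕ τ]`. -/
noncomputable def ztensor {K : Type} [Field K] {p q : ℕ} (a : Zn K p) (b : Zn K q) :
    Zn K (p + q) :=
  Finsupp.sum a.coeff fun σ f => Finsupp.sum b.coeff fun τ g =>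
    MonoidAlgebra.single (permShift σ τ) (f * g)

/-- An ideal of the wheeled PROP `𝒵`: a family `I_n ⊆ 𝒵_n` such that each `I_n` is a
two-sided ideal of the ring `K[t][Σ_n]`, closed under tensoring (on either side) with
arbitrary elements, and closed under contraction. -/
structure ZIdeal (K : Type) [Field K] where
  carrier : ∀ n : ℕ, Set (Zn K n)
  zero_mem : ∀ n : ℕ, (0 : Zn K n) ∈ carrier n
  add_mem : ∀ (n : ℕ) (a b : Zn K n), a ∈ carrier n → b ∈ carrier n → a + b ∈ carrier n
  neg_mem : ∀ (n : ℕ) (a : Zn K n), a ∈ carrier n → -a ∈ carrier n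
  mul_mem_left : ∀ (n : ℕ) (r a : Zn K n), a ∈ carrier n → r * a ∈ carrier n
  mul_mem_right : ∀ (n : ℕ) (r a : Zn K n), a ∈ carrier n → a * r ∈ carrier n
  tensor_mem_left : ∀ (p q : ℕ) (a : Zn K p) (b : Zn K q),
    a ∈ carrier p → ztensor a b ∈ carrier (p + q)
  tensor_mem_right : ∀ (p q : ℕ) (a : Zn K p) (b : Zn K q),
    a ∈ carrier p → ztensor b a ∈ carrier (q + p)
  contract_mem : ∀ (n : ℕ) (a : Zn K (n + 1)), a ∈ carrier (n + 1) → contractZ a ∈ carrier n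

/-- A nonzero ideal of `𝒵`. -/
def ZIdeal.Nonzero {K : Type} [Field K] (I : ZIdeal K) : Prop :=
  ∃ (d : ℕ) (a : Zn K d), a ∈ I.carrier d ∧ a ≠ 0

/-- A standard Young tableau of shape `μ` with entries in `Fin n`:
a bijection from the cells of `μ` to `Fin n` (thought of as the entries `1,…,n`)
that increases along rows and columns.  (Coordinates of cells are 0-indexed,
in matrix convention: `(i, j)` is row `i`, column `j`.) -/
structure SYT (μ : YoungDiagram) (n : ℕ) where
  toEquiv : {c : ℕ × ℕ // c ∈ μ} ≃ Fin n
  row_lt : ∀ c d : {c : ℕ × ℕ // c ∈ μ},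
    c.1.1 = d.1.1 → c.1.2 < d.1.2 → toEquiv c < toEquiv d
  col_lt : ∀ c d : {c : ℕ × ℕ // c ∈ μ},
    c.1.2 = d.1.2 → c.1.1 < d.1.1 → toEquiv c < toEquiv d

/-- `σ` belongs to the row stabilizer `R(T)` of the tableau `T`. -/
def isRowStab {μ : YoungDiagram} {n : ℕ} (T : SYT μ n) (σ : Equiv.Perm (Fin n)) : Prop :=
  ∀ k : Fin n, (T.toEquiv.symm (σ k)).1.1 = (T.toEquiv.symm k).1.1

/-- `σ` belongs to the column stabilizer `C(T)` of the tableau `T`. -/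
def isColStab {μ : YoungDiagram} {n : ℕ} (T : SYT μ n) (σ : Equiv.Perm (Fin n)) : Prop :=
  ∀ k : Fin n, (T.toEquiv.symm (σ k)).1.2 = (T.toEquiv.symm k).1.2

open Classical in
/-- The Young symmetrizer `y_T = Σ_{σ ∈ R(T), π ∈ C(T)} sgn(π)·[π σ]`, with
coefficients in a commutative ring `R`. -/
noncomputable def ySym (R : Type) [CommRing R] {μ : YoungDiagram} {n : ℕ} (T : SYT μ n) :
    MonoidAlgebra R (Equiv.Perm (Fin n)) :=
  ∑ σ : Equiv.Perm (Fin n), ∑ π : Equiv.Perm (Fin n),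
    if isRowStab T σ ∧ isColStab T π then
      MonoidAlgebra.single (π * σ) (((Equiv.Perm.sign π : ℤ) : R))
    else 0

/-- The two-sided span `A·S·A` of a subset `S` of a `K`-algebra `A`,
as a `K`-subspace. -/
noncomputable def twoSidedSpan {K : Type} [Field K] {A : Type} [Ring A] [Algebra K A]
    (S : Set A) : Submodule K A :=
  Submodule.span K {x | ∃ a b : A, ∃ s ∈ S, x = a * s * b}

/-- The simple two-sided ideal `J_λ = KΣ_n · y_T · KΣ_n ⊆ KΣ_n` attached to a
partition (Young diagram) `μ`; it does not depend on the choice of a standard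
Young tableau `T` of shape `μ`, so we take the supremum over all of them. -/
noncomputable def Jideal (K : Type) [Field K] (n : ℕ) (μ : YoungDiagram) :
    Submodule K (GA K n) :=
  ⨆ T : SYT μ n, twoSidedSpan {ySym K T}

/-- The embedding `KΣ_n → K[t][Σ_n]` (coefficientwise `K → K[t]`). -/
noncomputable def embZ (K : Type) [Field K] (n : ℕ) : GA K n →ₗ[K] Zn K n :=
  (MonoidAlgebra.coeffLinearEquiv K).symm.toLinearMap ∘ₗ
    Finsupp.mapRange.linearMap (Algebra.linearMap K (Polynomial K)) ∘ₗ
    (MonoidAlgebra.coeffLinearEquiv K).toLinearMap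

/-- `J_λ`, regarded inside `𝒵_n = K[t][Σ_n]` (as a `K`-subspace). -/
noncomputable def JZ (K : Type) [Field K] (n : ℕ) (μ : YoungDiagram) :
    Submodule K (Zn K n) :=
  Submodule.map (embZ K n) (Jideal K n μ)

/-- `L·J_λ ⊆ 𝒵_n`: the `K`-span of products `f • x` with `f ∈ L ⊆ K[t]`, `x ∈ J_λ`. -/
noncomputable def LJ (K : Type) [Field K] (n : ℕ) (L : Ideal (Polynomial K))
    (μ : YoungDiagram) : Submodule K (Zn K n) :=
  Submodule.span K {x | ∃ f ∈ L, ∃ y ∈ JZ K n μ, x = f • y}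

/-- The partitions of `n`, as Young diagrams with `n` cells. -/
def Par (n : ℕ) : Type := {μ : YoungDiagram // μ.card = n}

/-- `I_n` decomposes as the direct sum `⊕_{λ ⊢ n} L_λ·J_λ`. -/
def IsDecomp (K : Type) [Field K] (n : ℕ) (S : Set (Zn K n))
    (L : Par n → Ideal (Polynomial K)) : Prop :=
  S = ↑(⨆ μ : Par n, LJ K n (L μ) μ.1) ∧ iSupIndep fun μ : Par n => LJ K n (L μ) μ.1

/-- For a monic `f ∈ K[t]` and a finite set `C` of boxes, the polynomial
`g_λ = f · ∏_{(i,j) ∈ C, (i,j) ∉ λ} (t + j − i)`. -/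
noncomputable def gOf (K : Type) [Field K] (f : Polynomial K) (C : Finset (ℕ × ℕ))
    (μ : YoungDiagram) : Polynomial K :=
  f * ∏ c ∈ C.filter (fun c => c ∉ μ), ((X : Polynomial K) + (c.2 : Polynomial K) - (c.1 : Polynomial K))

/-- The `n`-th piece of the ideal `I(f, C)` of `𝒵`:
`I(f,C)_n = ⊕_{λ ⊢ n} (g_λ)·J_λ`. -/
noncomputable def IfcCarrier (K : Type) [Field K] (f : Polynomial K) (C : Finset (ℕ × ℕ))
    (n : ℕ) : Set (Zn K n) :=
  ↑(⨆ μ : Par n, LJ K n (Ideal.span {gOf K f C μ.1}) μ.1)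

lemma reduceLast_fix {n : ℕ} {σ : Equiv.Perm (Fin (n + 1))}
    (h : σ (Fin.last n) = Fin.last n) (k : Fin n) :
    σ k.castSucc = (reduceLast σ k).castSucc := by
  have hne : finSuccEquivLast.permCongr σ (some k) ≠ none := by
    simp only [Equiv.permCongr_apply, finSuccEquivLast_symm_some]
    intro hc
    have : σ k.castSucc = Fin.last n := by
      have := congrArg finSuccEquivLast.symm hc
      simpa using this
    have h3 : σ.symm (Fin.last n) = Fin.last n := by
      conv_lhs => rw [← h]; simp
    have h2 : (k.castSucc : Fin (n+1)) = Fin.last n := by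
      have := congrArg σ.symm this
      rw [Equiv.symm_apply_apply, h3] at this
      exact this
    exact (Fin.castSucc_lt_last k).ne h2
  obtain ⟨y, hy⟩ := Option.ne_none_iff_exists'.mp hne
  have := Equiv.removeNone_some _ ⟨y, hy⟩
  rw [Equiv.permCongr_apply, finSuccEquivLast_symm_some] at this
  have := congrArg finSuccEquivLast.symm this.symm
  simpa [reduceLast] using this

lemma reduceLast_eq_one {n : ℕ} {σ : Equiv.Perm (Fin (n + 1))}
    (h : σ (Fin.last n) = Fin.last n) (hr : reduceLast σ = 1) : σ = 1 := by
  ext x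
  rcases Fin.eq_castSucc_or_eq_last x with ⟨k, rfl⟩ | rfl
  · simp [reduceLast_fix h k, hr]
  · simp [h]

/-- Step lemma: descend a nonzero element of `I_{n+1}` to one of `I_n`. -/
lemma step_lemma (K : Type) [Field K] (I : ZIdeal K) (n : ℕ)
    (h : ∃ a ∈ I.carrier (n + 1), a ≠ 0) : ∃ a ∈ I.carrier n, a ≠ 0 := by
  obtain ⟨a, haI, ha⟩ := h
  -- choose σ₀ in the support of a with coefficient of maximal degree
  have hsupp : a.coeff.support.Nonempty := Finsupp.support_nonempty_iff.mpr (mt MonoidAlgebra.coeff_eq_zero.mp ha)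
  obtain ⟨σ₀, hσ₀, hmax⟩ := Finset.exists_max_image a.coeff.support (fun σ => (a.coeff σ).degree) hsupp
  have ha0 : a.coeff σ₀ ≠ 0 := Finsupp.mem_support_iff.mp hσ₀
  set b : Zn K (n + 1) := MonoidAlgebra.single σ₀⁻¹ (1 : Polynomial K) * a with hb
  have hbI : b ∈ I.carrier (n + 1) := I.mul_mem_left _ _ a haI
  have hbapp : ∀ τ, b.coeff τ = a.coeff (σ₀ * τ) := fun τ => by
    rw [hb, MonoidAlgebra.coeff_single_mul_apply, inv_inv, one_mul]
  have hb1 : b.coeff 1 = a.coeff σ₀ := by rw [hbapp, mul_one]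
  have hbdeg : ∀ τ, (b.coeff τ).degree ≤ (a.coeff σ₀).degree := by
    intro τ
    rw [hbapp]
    by_cases hz : a.coeff (σ₀ * τ) = 0
    · simp [hz]
    · exact hmax _ (Finsupp.mem_support_iff.mpr hz)
  refine ⟨contractZ b, I.contract_mem n b hbI, fun hc => ?_⟩
  -- compute the coefficient of `contractZ b` at 1
  have hco : (contractZ b).coeff 1 = ∑ σ ∈ b.coeff.support,
      if reduceLast σ = 1 then
        (if σ (Fin.last n) = Fin.last n then (X : Polynomial K) else 1) * b.coeff σ
      else 0 := by
    rw [contractZ, MonoidAlgebra.coeff_finsuppSum, Finsupp.sum_apply, Finsupp.sum]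
    refine Finset.sum_congr rfl fun σ _ => ?_
    rw [MonoidAlgebra.single_apply]
  have h1s : (1 : Equiv.Perm (Fin (n+1))) ∈ b.coeff.support := by
    rw [Finsupp.mem_support_iff, hb1]; exact ha0
  have hrl1 : reduceLast (1 : Equiv.Perm (Fin (n+1))) = 1 := by
    ext k
    have := reduceLast_fix (σ := (1 : Equiv.Perm (Fin (n+1)))) (by simp) k
    simp only [Equiv.Perm.coe_one, id_eq] at this
    exact (Fin.castSucc_injective n this.symm).symm ▸ by
      simpa using (Fin.castSucc_injective n this).symm
  have hsplit : (contractZ b).coeff 1 = X * b.coeff 1 + ∑ σ ∈ b.coeff.support.erase 1,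
      (if reduceLast σ = 1 then
        (if σ (Fin.last n) = Fin.last n then (X : Polynomial K) else 1) * b.coeff σ
      else 0) := by
    rw [hco, ← Finset.add_sum_erase _ _ h1s]
    congr 1
    simp [hrl1]
  -- the remaining sum has degree ≤ deg (a σ₀)
  have hrest : (∑ σ ∈ b.coeff.support.erase 1,
      (if reduceLast σ = 1 then
        (if σ (Fin.last n) = Fin.last n then (X : Polynomial K) else 1) * b.coeff σ
      else 0)).degree ≤ (a.coeff σ₀).degree := by
    refine (Polynomial.degree_sum_le _ _).trans ?_
    rw [Finset.sup_le_iff]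
    intro σ hσ
    obtain ⟨hne1, _⟩ := Finset.mem_erase.mp hσ
    by_cases hr : reduceLast σ = 1
    · have hfix : σ (Fin.last n) ≠ Fin.last n := fun hf => hne1 (reduceLast_eq_one hf hr)
      simp only [hr, if_true, hfix, if_false, one_mul]
      exact hbdeg σ
    · simp [hr]
  have hXdeg : (X * b.coeff 1).degree = (a.coeff σ₀).degree + 1 := by
    rw [hb1, Polynomial.degree_mul, Polynomial.degree_X, add_comm]
  have hlt : (∑ σ ∈ b.coeff.support.erase 1,
      (if reduceLast σ = 1 then
        (if σ (Fin.last n) = Fin.last n then (X : Polynomial K) else 1) * b.coeff σ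
      else 0)).degree < (X * b.coeff 1).degree := by
    refine hrest.trans_lt ?_
    rw [hXdeg, Polynomial.degree_eq_natDegree ha0]
    exact_mod_cast Nat.lt_succ_self _
  have : (contractZ b).coeff 1 ≠ 0 := by
    rw [hsplit, add_comm]
    intro hzero
    have := Polynomial.degree_add_eq_right_of_degree_lt hlt
    rw [hzero, Polynomial.degree_zero, hXdeg, Polynomial.degree_eq_natDegree ha0] at this
    exact absurd this.symm (by
      rw [← Nat.cast_add_one]
      exact WithBot.natCast_ne_bot _)
  exact this (by rw [hc]; rfl)

lemma zn0_eq_single {K : Type} [Field K] (a : Zn K 0) :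
    a = MonoidAlgebra.single 1 (a.coeff 1) := by
  refine MonoidAlgebra.ext (Finsupp.ext fun τ => ?_)
  have : τ = 1 := Subsingleton.elim τ 1
  subst this
  simp [MonoidAlgebra.coeff_single, Finsupp.single_apply]

theorem stmt5 (K : Type) [Field K] [CharZero K] (I : ZIdeal K) (h : I.Nonzero) :
    (∃ a ∈ I.carrier 0, a ≠ 0) ∧
    ∃ g : Polynomial K, g.Monic ∧
      ∀ f : Polynomial K,
        MonoidAlgebra.single (1 : Equiv.Perm (Fin 0)) f ∈ I.carrier 0 ↔ g ∣ f := by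
  classical
  obtain ⟨d, a, haI, ha⟩ := h
  have key : ∀ d : ℕ, (∃ a ∈ I.carrier d, a ≠ 0) → ∃ a ∈ I.carrier 0, a ≠ 0 := by
    intro d
    induction d with
    | zero => exact id
    | succ n ih => intro hd; exact ih (step_lemma K I n hd)
  obtain ⟨a0, ha0I, ha0⟩ := key d ⟨a, haI, ha⟩
  refine ⟨⟨a0, ha0I, ha0⟩, ?_⟩
  set J : Ideal (Polynomial K) :=
    { carrier := {f | MonoidAlgebra.single (1 : Equiv.Perm (Fin 0)) f ∈ I.carrier 0}
      add_mem' := fun {f g} hf hg => by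
        have := I.add_mem 0 _ _ hf hg
        rwa [← MonoidAlgebra.single_add] at this
      zero_mem' := by
        have := I.zero_mem 0
        simpa using this
      smul_mem' := fun c f hf => by
        have := I.mul_mem_left 0 (MonoidAlgebra.single 1 c) _ hf
        rwa [MonoidAlgebra.single_mul_single, one_mul, ← smul_eq_mul] at this } with hJ
  have hmemJ : ∀ f : Polynomial K,
      (MonoidAlgebra.single (1 : Equiv.Perm (Fin 0)) f ∈ I.carrier 0 ↔ f ∈ J) := fun f => Iff.rfl
  have hJne : J ≠ ⊥ := by
    intro hbot
    have h1 : a0.coeff 1 ∈ J := by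
      show MonoidAlgebra.single (1 : Equiv.Perm (Fin 0)) (a0.coeff 1) ∈ I.carrier 0
      rw [← zn0_eq_single a0]; exact ha0I
    rw [hbot, Ideal.mem_bot] at h1
    apply ha0
    rw [zn0_eq_single a0, h1]
    simp
  have hgen : Submodule.IsPrincipal.generator J ≠ 0 := by
    intro hz
    exact hJne ((Submodule.IsPrincipal.eq_bot_iff_generator_eq_zero J).mpr hz)
  refine ⟨normalize (Submodule.IsPrincipal.generator J), Polynomial.monic_normalize hgen, ?_⟩
  intro f
  rw [hmemJ, Submodule.IsPrincipal.mem_iff_generator_dvd, ← normalize_dvd_iff]
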